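/- Let G be a ternary semigroup, A a real normed ring whose norm is multiplicative (‖ab‖ = ‖a‖·‖b‖ for all a, b ∈ A), ε ≥ 0, and δ > 1 with δ² − δ = ε. Suppose f : G → A satisfies ‖f([xyz]) − f(x)·f(y)·f(z)‖ ≤ ε for all x, y, z ∈ G. If u ∈ G and p > 0 satisfy ‖f(u)‖ = δ + p, then ‖f(u^{3^n})‖ ≥ δ + (n+1)·p for every positive integer n. -/
import Mathlib


/-- Iterated cube: `cubeIter op x n = x^{3^n}` where `x³ = op x x x`. -/
def cubeIter {G : Type*} (op : G → G → G → G) (x : G) : ℕ → G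
  | 0 => x
  | n + 1 => op (cubeIter op x n) (cubeIter op x n) (cubeIter op x n)

theorem stmt_8 {G : Type*} (op : G → G → G → G)
    (assoc : ∀ x y z u v : G,
      op (op x y z) u v = op x (op y z u) v ∧
      op x (op y z u) v = op x y (op z u v))
    {A : Type*} [NormedRing A]
    (hmul : ∀ a b : A, ‖a * b‖ = ‖a‖ * ‖b‖)
    (ε δ : ℝ) (hε : 0 ≤ ε) (hδ : 1 < δ) (hδε : δ ^ 2 - δ = ε)
    (f : G → A)
    (hf : ∀ x y z : G, ‖f (op x y z) - f x * f y * f z‖ ≤ ε)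
    (u : G) (p : ℝ) (hp : 0 < p) (hu : ‖f u‖ = δ + p) :
    ∀ n : ℕ, 0 < n → δ + (n + 1) * p ≤ ‖f (cubeIter op u n)‖ := by
  have key : ∀ n : ℕ, δ + (n + 1) * p ≤ ‖f (cubeIter op u n)‖ := by
    intro n
    induction n with
    | zero => simp [cubeIter, hu]
    | succ n ih =>
      set x := cubeIter op u n with hx
      have hq : (0:ℝ) ≤ (n + 1) * p := by positivity
      have hcube : ‖f x‖ ^ 3 - ε ≤ ‖f (op x x x)‖ := by
        have h1 := hf x x x
        have h2 : ‖f x * f x * f x‖ = ‖f x‖ ^ 3 := by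
          rw [hmul, hmul]; ring
        have h5 : ‖f x * f x * f x‖ - ε ≤ ‖f (op x x x)‖ := by
          have := norm_sub_norm_le (f x * f x * f x) (f (op x x x))
          have h6 : ‖f x * f x * f x - f (op x x x)‖ = ‖f (op x x x) - f x * f x * f x‖ := by
            rw [norm_sub_rev]
          linarith [h1, h6 ▸ this]
        linarith [h2 ▸ h5]
      have hmono : (δ + (n + 1) * p) ^ 3 ≤ ‖f x‖ ^ 3 := by
        apply pow_le_pow_left₀ (by nlinarith) ih
      have hstep : δ + ((n:ℝ) + 1 + 1) * p ≤ (δ + (n + 1) * p) ^ 3 - ε := by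
        nlinarith [sq_nonneg ((n:ℝ)+1), sq_nonneg p, mul_pos hp hp, sq_nonneg (δ - 1),
          mul_nonneg hq hq, mul_nonneg (mul_nonneg hq hq) hq]
      push_cast
      calc δ + ((n:ℝ) + 1 + 1) * p
          ≤ (δ + (n + 1) * p) ^ 3 - ε := hstep
        _ ≤ ‖f x‖ ^ 3 - ε := by linarith
        _ ≤ ‖f (op x x x)‖ := hcube
        _ = ‖f (cubeIter op u (n+1))‖ := by rw [cubeIter]
  intro n _
  exact key n
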